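/- Let X = X[λ, μ, 𝒜, C̄]. If F ⊆ X is closed, α ∈ S^λ_μ, and C_α ⊆ (π(F))' (i.e., every element of C_α is an accumulation point of π(F) in λ), then F ∩ X_α = X_α. -/

import Mathlib

open Set Ordinal Cardinal Topology

noncomputable section

namespace DSoukupPaper

/-- The set `S^λ_μ` of ordinals below `lam` of cofinality `mu`. -/
def Sset (lam : Ordinal.{0}) (mu : Cardinal.{0}) : Set Ordinal := {α | α < lam ∧ α.cof = mu}

/-- `C` is a club in the ordinal `o`. -/
def IsClubBelow (C : Set Ordinal.{0}) (o : Ordinal.{0}) : Prop :=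
  C ⊆ Set.Iio o ∧ (∀ β < o, ∃ γ ∈ C, β ≤ γ) ∧
    (∀ β < o, Order.IsSuccLimit β → (∀ γ < β, ∃ δ ∈ C, γ < δ ∧ δ < β) → β ∈ C)

/-- `A` is nonstationary in the ordinal `o`. -/
def IsNonstationaryBelow (A : Set Ordinal.{0}) (o : Ordinal.{0}) : Prop :=
  ∃ C : Set Ordinal, IsClubBelow C o ∧ ∀ x ∈ A, x ∉ C

/-- `A` is stationary in the ordinal `o`. -/
def IsStationaryBelow (A : Set Ordinal.{0}) (o : Ordinal.{0}) : Prop :=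
  ∀ C : Set Ordinal, IsClubBelow C o → ∃ x ∈ A, x ∈ C

/-- A `T₁` space is linearly D iff every nontrivial monotone open cover admits a
closed discrete big set (Guo–Junnila characterization, taken as definition). -/
def LinearlyDSpace (Y : Type*) [TopologicalSpace Y] : Prop :=
  ∀ 𝒰 : Set (Set Y), (∀ U ∈ 𝒰, IsOpen U) → ⋃₀ 𝒰 = Set.univ →
    IsChain (· ⊆ ·) 𝒰 → (∀ U ∈ 𝒰, U ≠ Set.univ) →
    ∃ D : Set Y, IsClosed D ∧ DiscreteTopology D ∧ ∀ U ∈ 𝒰, ¬D ⊆ U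

/-- The data of the construction `X[λ,μ,𝒜,C̄]`: cardinals `λ > μ = cf(μ)`,
a MAD family `𝒜 = {M^φ : φ < κ} ⊆ [μ]^μ`, and an `S^λ_μ`-club sequence
`C̄ = ⟨C_α : α ∈ S^λ_μ⟩`, given via increasing enumerations `a α : μ → C_α`. -/
structure Setup where
  lam : Cardinal.{0}
  mu : Cardinal.{0}
  kappa : Cardinal.{0}
  mu_reg : mu.IsRegular
  mu_lt_lam : mu < lam
  /-- the MAD family: `M φ` for `φ < κ` -/
  M : Ordinal.{0} → Set Ordinal.{0}
  M_sub : ∀ φ < kappa.ord, M φ ⊆ Set.Iio mu.ord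
  M_card : ∀ φ < kappa.ord, #(M φ) = Cardinal.lift.{1} mu
  M_ad : ∀ φ < kappa.ord, ∀ ψ < kappa.ord, φ ≠ ψ →
    #(↥(M φ ∩ M ψ)) < Cardinal.lift.{1} mu
  M_mad : ∀ N ⊆ Set.Iio mu.ord, #N = Cardinal.lift.{1} mu →
    ∃ φ < kappa.ord, #(↥(N ∩ M φ)) = Cardinal.lift.{1} mu
  /-- the club sequence: `a α ξ` is the `ξ`-th element of `C_α` -/
  a : Ordinal.{0} → Ordinal.{0} → Ordinal.{0}
  a_mono : ∀ α ∈ Sset lam.ord mu, ∀ ξ < mu.ord, ∀ ζ < ξ, a α ζ < a α ξ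
  a_lt : ∀ α ∈ Sset lam.ord mu, ∀ ξ < mu.ord, a α ξ < α
  a_unbounded : ∀ α ∈ Sset lam.ord mu, ∀ β < α, ∃ ξ < mu.ord, β ≤ a α ξ
  a_closed : ∀ α ∈ Sset lam.ord mu, ∀ ξ < mu.ord, Order.IsSuccLimit ξ →
    IsLUB (a α '' Set.Iio ξ) (a α ξ)

namespace Setup

variable (P : Setup)

/-- `C_α` as a set. -/
def C (α : Ordinal) : Set Ordinal := P.a α '' Set.Iio P.mu.ord

open Classical in
/-- the interval `I^ξ_α`. -/
def I (α ξ : Ordinal) : Set Ordinal :=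
  if Order.IsSuccLimit ξ then Set.Icc (P.a α ξ) (P.a α (ξ + 1)) else Set.Ioc (P.a α ξ) (P.a α (ξ + 1))

/-- the underlying set of the space: a subset of `λ × κ`. -/
def Xset : Set (Ordinal × Ordinal) :=
  {p | p.1 < P.lam.ord ∧
    ((p.1 ∈ Sset P.lam.ord P.mu ∧ p.2 < P.kappa.ord) ∨
      (p.1 ∉ Sset P.lam.ord P.mu ∧ p.2 = 0))}

/-- the column `X_α` (as a set of pairs). -/
def col (α : Ordinal) : Set (Ordinal × Ordinal) := {p ∈ P.Xset | p.1 = α}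

/-- basic neighborhood `U((α,φ),η)` for `α ∈ S^λ_μ`. -/
def U1 (α φ η : Ordinal) : Set (Ordinal × Ordinal) :=
  {(α, φ)} ∪ ⋃ γ ∈ (⋃ ξ ∈ {ξ | ξ ∈ P.M φ ∧ η ≤ ξ}, P.I α ξ), P.col γ

/-- basic neighborhood `U(α,β) = ⋃{X_γ : β < γ ≤ α}`. -/
def U3 (α β : Ordinal) : Set (Ordinal × Ordinal) := ⋃ γ ∈ Set.Ioc β α, P.col γ

/-- the collection of basic open sets. -/
def basics : Set (Set (Ordinal × Ordinal)) :=
  {B | (∃ α ∈ Sset P.lam.ord P.mu, ∃ φ < P.kappa.ord, ∃ η < P.mu.ord, B = P.U1 α φ η) ∨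
    (∃ α < P.lam.ord, α.cof < P.mu ∧ B = {(α, 0)}) ∨
    (∃ α < P.lam.ord, P.mu < α.cof ∧ ∃ β < α, B = P.U3 α β)}

/-- the topology of `X[λ,μ,𝒜,C̄]`, generated by the basic open sets. -/
instance instTopo : TopologicalSpace ↥P.Xset :=
  TopologicalSpace.generateFrom {V | ∃ B ∈ P.basics, V = Subtype.val ⁻¹' B}

/-- the column `X_α` viewed inside the space. -/
def colS (α : Ordinal) : Set ↥P.Xset := {x | (x : Ordinal × Ordinal).1 = α}

/-- the projection `π(F) = {α < λ : F ∩ X_α ≠ ∅}`. -/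
def pi (F : Set ↥P.Xset) : Set Ordinal := {α | ∃ x ∈ F, (x : Ordinal × Ordinal).1 = α}

/-- `F` is unbounded iff `π(F)` is unbounded in `λ`. -/
def Unbounded (F : Set ↥P.Xset) : Prop := ∀ β < P.lam.ord, ∃ γ ∈ P.pi F, β < γ

/-- `F` is high enough iff `|{α < λ : |F_α| = |F|}| ≥ μ`. -/
def HighEnough (F : Set ↥P.Xset) : Prop :=
  Cardinal.lift.{1} P.mu ≤ #({α | #(↥(F ∩ P.colS α)) = #F} : Set Ordinal)

end Setup
end DSoukupPaper

namespace DSoukupPaper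

/-- Each `M φ` is unbounded in `μ`. -/
lemma M_unbounded_aux (P : Setup) {φ : Ordinal} (hφ : φ < P.kappa.ord) {η : Ordinal}
    (hη : η < P.mu.ord) : ∃ ξ ∈ P.M φ, η ≤ ξ := by
  by_contra h
  push_neg at h
  have hsub : P.M φ ⊆ Set.Iio η := fun ξ hξ => h ξ hξ
  have h1 : #(P.M φ) ≤ #(Set.Iio η) := Cardinal.mk_le_mk_of_subset hsub
  rw [P.M_card φ hφ, Ordinal.mk_Iio_ordinal] at h1
  have h2 : P.mu ≤ η.card := Cardinal.lift_le.mp h1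
  exact absurd (Cardinal.lt_ord.mp hη) (not_lt.mpr h2)

/-- A point of cofinality `μ` cannot be `a α₁ ξ₁` for a limit `ξ₁ < μ`. -/
lemma not_lub_limit_aux (P : Setup) {α₁ α ξ₁ : Ordinal} (hα₁ : α₁ ∈ Sset P.lam.ord P.mu)
    (hα : α ∈ Sset P.lam.ord P.mu) (hξ₁ : ξ₁ < P.mu.ord) (hlim : Order.IsSuccLimit ξ₁) :
    P.a α₁ ξ₁ ≠ α := by
  intro heq
  have hlub := P.a_closed α₁ hα₁ ξ₁ hξ₁ hlim
  rw [heq] at hlub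
  have hne : Nonempty ξ₁.ToType := Ordinal.nonempty_toType_iff.2 hlim.pos.ne'
  set f : ξ₁.ToType → Ordinal := fun i => P.a α₁ ((Ordinal.ToType.mk (o := ξ₁)).symm i : Ordinal)
    with hf
  have hrange : Set.range f = P.a α₁ '' Set.Iio ξ₁ := by
    ext β
    constructor
    · rintro ⟨i, rfl⟩
      exact ⟨_, ((Ordinal.ToType.mk (o := ξ₁)).symm i).2, rfl⟩
    · rintro ⟨ζ, hζ, rfl⟩
      exact ⟨(Ordinal.ToType.mk (o := ξ₁)) ⟨ζ, hζ⟩, by simp [hf]⟩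
  have hlub' : IsLUB (Set.range f) α := by rw [hrange]; exact hlub
  have hsup : iSup f = α := hlub'.csSup_eq (Set.range_nonempty f)
  have hlt : ∀ i, f i < iSup f := by
    intro i
    rw [hsup]
    calc f i < P.a α₁ ξ₁ :=
          P.a_mono α₁ hα₁ ξ₁ hξ₁ _ ((Ordinal.ToType.mk (o := ξ₁)).symm i).2
      _ = α := heq
  have hcof := Ordinal.cof_iSup_le hlt
  rw [hsup, Cardinal.mk_toType] at hcof
  have hle : P.mu ≤ ξ₁.card := hα.2 ▸ hcof
  exact absurd (Cardinal.lt_ord.mp hξ₁) (not_lt.mpr hle)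

/-- If `F` is closed, `α ∈ S^λ_μ` and every element of `C_α` is an accumulation point of
`π(F)`, then `F ∩ X_α = X_α`, i.e. the whole column lies in `F`. -/
theorem stmt15 (P : Setup) (F : Set ↥P.Xset) (hF : IsClosed F) (α : Ordinal)
    (hα : α ∈ Sset P.lam.ord P.mu)
    (hC : ∀ c ∈ P.C α, ∀ β < c, ∃ γ ∈ P.pi F, β < γ ∧ γ < c) :
    P.colS α ⊆ F := by
  classical
  intro x hx
  have hx1 : (x : Ordinal × Ordinal).1 = α := hx
  have hκ : (x : Ordinal × Ordinal).2 < P.kappa.ord := by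
    rcases x.2.2 with ⟨_, h⟩ | ⟨h, _⟩
    · exact h
    · exact absurd (by rwa [hx1]) h
  have hμlim := Cardinal.isSuccLimit_ord P.mu_reg.aleph0_le
  have hμ0 : (0 : Ordinal) < P.mu.ord := hμlim.pos
  have hα0 : (0 : Ordinal) < α := by
    by_contra h
    push_neg at h
    have hz : α = 0 := le_antisymm h (zero_le (a := α))
    have := hα.2
    rw [hz, Ordinal.cof_zero] at this
    exact P.mu_reg.pos.ne' this.symm
  rw [← hF.closure_eq]
  have hb := TopologicalSpace.isTopologicalBasis_of_subbasis
    (t := P.instTopo) (s := {V | ∃ B ∈ P.basics, V = Subtype.val ⁻¹' B}) rfl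
  rw [hb.mem_closure_iff]
  rintro o ⟨T, ⟨hTfin, hTsub⟩, rfl⟩ hxo
  have claim : ∀ V ∈ T, ∃ η, η < P.mu.ord ∧ ∃ δ, δ < α ∧
      ∀ ξ, ξ ∈ P.M (x : Ordinal × Ordinal).2 → η ≤ ξ → ξ + 1 < P.mu.ord →
      ∀ γ, δ < γ → γ < α → P.a α ξ < γ → γ < P.a α (ξ + 1) →
      ∀ y : ↥P.Xset, (y : Ordinal × Ordinal).1 = γ → y ∈ V := by
    intro V hV
    obtain ⟨B, hB, rfl⟩ := hTsub hV
    have hxB : (x : Ordinal × Ordinal) ∈ B := hxo _ hV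
    rcases hB with ⟨α₁, hα₁, φ₁, hφ₁, η₁, hη₁, rfl⟩ | ⟨α₁, hα₁l, hα₁cof, rfl⟩ |
      ⟨α₁, hα₁l, hα₁cof, β₁, hβ₁, rfl⟩
    · -- case U1
      rw [Setup.U1] at hxB
      rcases hxB with hsing | hcol
      · -- x = (α₁, φ₁) : type A neighborhood
        rw [Set.mem_singleton_iff, Prod.ext_iff] at hsing
        obtain ⟨h1, h2⟩ := hsing
        have e1 : α₁ = α := h1.symm.trans hx1
        subst e1
        have e2 : φ₁ = (x : Ordinal × Ordinal).2 := h2.symm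
        subst e2
        refine ⟨η₁, hη₁, 0, hα0, ?_⟩
        intro ξ hξM hηξ hξμ γ hδγ hγα haγ hγa y hy
        refine Set.mem_preimage.mpr ?_
        rw [Setup.U1]
        refine Set.mem_union_right _ ?_
        rw [Set.mem_iUnion₂]
        refine ⟨γ, ?_, y.2, hy⟩
        rw [Set.mem_iUnion₂]
        refine ⟨ξ, ⟨hξM, hηξ⟩, ?_⟩
        rw [Setup.I]
        split_ifs
        · exact ⟨le_of_lt haγ, le_of_lt hγa⟩
        · exact ⟨haγ, le_of_lt hγa⟩
      · -- x lies in the column part of U1 α₁ φ₁ η₁ : type B neighborhood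
        rw [Set.mem_iUnion₂] at hcol
        obtain ⟨γ', hγ'mem, hγ'col⟩ := hcol
        have hγ'α : γ' = α := hγ'col.2.symm.trans hx1
        rw [hγ'α] at hγ'mem
        rw [Set.mem_iUnion₂] at hγ'mem
        obtain ⟨ξ₁, ⟨hξ₁M, hξ₁η⟩, hξ₁I⟩ := hγ'mem
        have hξ₁μ : ξ₁ < P.mu.ord := P.M_sub φ₁ hφ₁ hξ₁M
        have hI : P.a α₁ ξ₁ < α ∧ α ≤ P.a α₁ (ξ₁ + 1) := by
          rw [Setup.I] at hξ₁I
          split_ifs at hξ₁I with hl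
          · exact ⟨lt_of_le_of_ne hξ₁I.1 (not_lub_limit_aux P hα₁ hα hξ₁μ hl), hξ₁I.2⟩
          · exact ⟨hξ₁I.1, hξ₁I.2⟩
        refine ⟨0, hμ0, P.a α₁ ξ₁, hI.1, ?_⟩
        intro ξ hξM hηξ hξμ γ hδγ hγα haγ hγa y hy
        refine Set.mem_preimage.mpr ?_
        rw [Setup.U1]
        refine Set.mem_union_right _ ?_
        rw [Set.mem_iUnion₂]
        refine ⟨γ, ?_, y.2, hy⟩
        rw [Set.mem_iUnion₂]
        refine ⟨ξ₁, ⟨hξ₁M, hξ₁η⟩, ?_⟩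
        have hγle : γ ≤ P.a α₁ (ξ₁ + 1) := le_of_lt (lt_of_lt_of_le hγα hI.2)
        rw [Setup.I]
        split_ifs
        · exact ⟨le_of_lt hδγ, hγle⟩
        · exact ⟨hδγ, hγle⟩
    · -- case singleton: impossible since cof α = μ
      exfalso
      rw [Set.mem_singleton_iff, Prod.ext_iff] at hxB
      have e1 : α₁ = α := hxB.1.symm.trans hx1
      rw [e1, hα.2] at hα₁cof
      exact lt_irrefl _ hα₁cof
    · -- case U3 : type B neighborhood
      rw [Setup.U3, Set.mem_iUnion₂] at hxB
      obtain ⟨γ', hγ'Ioc, hγ'col⟩ := hxB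
      have hγ'α : γ' = α := hγ'col.2.symm.trans hx1
      rw [hγ'α] at hγ'Ioc
      refine ⟨0, hμ0, β₁, hγ'Ioc.1, ?_⟩
      intro ξ hξM hηξ hξμ γ hδγ hγα haγ hγa y hy
      refine Set.mem_preimage.mpr ?_
      rw [Setup.U3, Set.mem_iUnion₂]
      exact ⟨γ, ⟨hδγ, le_of_lt (lt_of_lt_of_le hγα hγ'Ioc.2)⟩, y.2, hy⟩
  choose! ηf hηf δf hδf hPf using claim
  have hbot : (⊥ : Ordinal) = 0 := rfl
  have hηs : hTfin.toFinset.sup ηf < P.mu.ord := by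
    rw [Finset.sup_lt_iff (by rw [hbot]; exact hμ0)]
    intro V hV
    exact hηf V (hTfin.mem_toFinset.mp hV)
  have hδs : hTfin.toFinset.sup δf < α := by
    rw [Finset.sup_lt_iff (by rw [hbot]; exact hα0)]
    intro V hV
    exact hδf V (hTfin.mem_toFinset.mp hV)
  obtain ⟨ζ, hζμ, hζ⟩ := P.a_unbounded α hα (hTfin.toFinset.sup δf) hδs
  have hsucc : ∀ ρ : Ordinal, ρ < P.mu.ord → ρ + 1 < P.mu.ord := by
    intro ρ hρ
    rw [Ordinal.add_one_eq_succ]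
    exact hμlim.succ_lt hρ
  have hm : max (hTfin.toFinset.sup ηf) (ζ + 1) < P.mu.ord :=
    max_lt hηs (hsucc ζ hζμ)
  obtain ⟨ξ, hξM, hξge⟩ := M_unbounded_aux P hκ hm
  have hξμ : ξ < P.mu.ord := P.M_sub _ hκ hξM
  have hξ1 : ξ + 1 < P.mu.ord := hsucc ξ hξμ
  have hlt_succ : ∀ ρ : Ordinal, ρ < ρ + 1 := by
    intro ρ
    rw [Ordinal.add_one_eq_succ]
    exact Order.lt_succ ρ
  have haa : P.a α ξ < P.a α (ξ + 1) := P.a_mono α hα (ξ + 1) hξ1 ξ (hlt_succ ξ)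
  have hδaξ : hTfin.toFinset.sup δf < P.a α ξ := by
    have hζξ : ζ < ξ := lt_of_lt_of_le ((hlt_succ ζ).trans_le (le_max_right _ _)) hξge
    exact lt_of_le_of_lt hζ (P.a_mono α hα ξ hξμ ζ hζξ)
  have hcmem : P.a α (ξ + 1) ∈ P.C α := ⟨ξ + 1, hξ1, rfl⟩
  obtain ⟨γ, hγπ, hγ1, hγ2⟩ := hC _ hcmem (P.a α ξ) haa
  have hγα : γ < α := lt_trans hγ2 (P.a_lt α hα (ξ + 1) hξ1)
  obtain ⟨y, hyF, hy1⟩ := hγπ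
  refine ⟨y, ?_, hyF⟩
  intro V hV
  have hVT : V ∈ T := hV
  have hVf : V ∈ hTfin.toFinset := hTfin.mem_toFinset.mpr hVT
  refine hPf V hVT ξ hξM ?_ hξ1 γ ?_ hγα hγ1 hγ2 y hy1
  · exact le_trans (le_trans (Finset.le_sup hVf) (le_max_left _ _)) hξge
  · exact lt_trans (lt_of_le_of_lt (Finset.le_sup hVf) hδaξ) hγ1
end DSoukupPaper
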